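/- arXiv:2112.10848 — 3 statements merged into one kernel-verified Lean document; each statement's English description precedes it below -/
import Mathlib

section
/- Let u be a solution to the problem Δ²u = (1 − |x|^p)e^{4u} on ℝ⁴ with x ↦ (1 − |x|^p)e^{4u(x)} integrable, and let v be the associated logarithmic potential. Then there exists a constant C such that for all x ∈ ℝ⁴ with |x| ≥ 4 one has v(x) ≤ −(Λ/(8π²))·log|x| + C. -/
open MeasureTheory Real Filter

noncomputable section

abbrev E4 : Type := EuclideanSpace ℝ (Fin 4)

/-- The Laplacian on `ℝ⁴`. -/
noncomputable def lap (u : E4 → ℝ) (x : E4) : ℝ :=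
  ∑ i : Fin 4, fderiv ℝ (fun y => fderiv ℝ u y (EuclideanSpace.single i 1)) x
    (EuclideanSpace.single i 1)

/-- `u` is a solution to `Δ²u = (1 - |x|^p) e^{4u}` on `ℝ⁴` with the right-hand side integrable. -/
def IsSolution (p : ℝ) (u : E4 → ℝ) : Prop :=
  ContDiff ℝ 4 u ∧
  (∀ x : E4, lap (lap u) x = (1 - ‖x‖ ^ p) * Real.exp (4 * u x)) ∧
  Integrable (fun x : E4 => (1 - ‖x‖ ^ p) * Real.exp (4 * u x))

/-- The total Q-curvature `Λ`. -/
noncomputable def QCurv (p : ℝ) (u : E4 → ℝ) : ℝ :=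
  ∫ x : E4, (1 - ‖x‖ ^ p) * Real.exp (4 * u x)

/-- The logarithmic potential `v` associated with `u`. -/
noncomputable def logPot (p : ℝ) (u : E4 → ℝ) (x : E4) : ℝ :=
  (1 / (8 * π ^ 2)) * ∫ y : E4, Real.log (‖y‖ / ‖x - y‖) * ((1 - ‖y‖ ^ p) * Real.exp (4 * u y))

/-- The singular integral `A(x)`. -/
noncomputable def singInt (p : ℝ) (u : E4 → ℝ) (x : E4) : ℝ :=
  (1 / (8 * π ^ 2)) * ∫ y in Metric.ball x 1,
    Real.log ‖x - y‖ * ((1 - ‖y‖ ^ p) * Real.exp (4 * u y))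

/-- `P : ℝ⁴ → ℝ` is a polynomial function of (total) degree at most `d`. -/
def IsPolyOfDegLE (P : E4 → ℝ) (d : ℕ) : Prop :=
  ∃ q : MvPolynomial (Fin 4) ℝ, q.totalDegree ≤ d ∧
    ∀ x : E4, P x = MvPolynomial.eval (fun i => x i) q

/-- `P : ℝ⁴ → ℝ` is a polynomial function of (total) degree exactly `d`. -/
def IsPolyOfDegEq (P : E4 → ℝ) (d : ℕ) : Prop :=
  ∃ q : MvPolynomial (Fin 4) ℝ, q.totalDegree = d ∧
    ∀ x : E4, P x = MvPolynomial.eval (fun i => x i) q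

/-- Scalar curvature of the conformal metric `e^{2u}|dx|²`. -/
noncomputable def scalCurv (u : E4 → ℝ) (x : E4) : ℝ :=
  -6 * Real.exp (-2 * u x) * (lap u x + ‖gradient u x‖ ^ 2)

open Set Metric

lemma integrableOn_log_ball_one (c : E4) :
    IntegrableOn (fun y : E4 => Real.log ‖y - c‖) (ball c 1) := by
  have hmeas : Measurable (fun y : E4 => Real.log ‖y - c‖) :=
    Real.measurable_log.comp ((measurable_id.sub measurable_const).norm)
  refine ⟨hmeas.aestronglyMeasurable, ?_⟩
  rw [hasFiniteIntegral_iff_norm]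
  have hleq : ∫⁻ y in ball c 1, ENNReal.ofReal ‖Real.log ‖y - c‖‖
      = ∫⁻ y in ball c 1, ENNReal.ofReal (-Real.log ‖y - c‖) := by
    refine setLIntegral_congr_fun measurableSet_ball (fun y hy => ?_)
    rw [Real.norm_eq_abs, abs_of_nonpos]
    refine Real.log_nonpos (norm_nonneg _) ?_
    rw [mem_ball, dist_eq_norm] at hy
    exact hy.le
  have hnn : 0 ≤ᵐ[volume.restrict (ball c 1)] fun y : E4 => -Real.log ‖y - c‖ := by
    refine (ae_restrict_iff' measurableSet_ball).2 (ae_of_all _ fun y hy => ?_)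
    rw [mem_ball, dist_eq_norm] at hy
    exact neg_nonneg.2 (Real.log_nonpos (norm_nonneg _) hy.le)
  rw [hleq, lintegral_eq_lintegral_meas_lt _ hnn hmeas.neg.aemeasurable]
  set V := volume (ball (0:E4) 1) with hV
  have key : ∀ t ∈ Set.Ioi (0:ℝ),
      (volume.restrict (ball c 1)) {a : E4 | t < -Real.log ‖a - c‖}
        ≤ ENNReal.ofReal (Real.exp (-(4*t))) * V := by
    intro t ht
    have ht0 : (0:ℝ) < t := ht
    have hsub : {a : E4 | t < -Real.log ‖a - c‖} ⊆ ball c (Real.exp (-t)) := by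
      intro a ha
      simp only [Set.mem_setOf_eq] at ha
      rw [mem_ball, dist_eq_norm]
      rcases eq_or_lt_of_le (norm_nonneg (a - c)) with h0 | h0
      · rw [← h0]; exact Real.exp_pos _
      · exact (Real.log_lt_iff_lt_exp h0).1 (by linarith)
    calc (volume.restrict (ball c 1)) {a : E4 | t < -Real.log ‖a - c‖}
        ≤ volume (ball c (Real.exp (-t))) :=
          le_trans (Measure.restrict_le_self _) (measure_mono hsub)
      _ = ENNReal.ofReal (Real.exp (-t) ^ (4:ℕ)) * V := by
          rw [Measure.addHaar_ball (volume : Measure E4) c (Real.exp_pos _).le]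
          norm_num [finrank_euclideanSpace_fin, hV]
      _ = ENNReal.ofReal (Real.exp (-(4*t))) * V := by
          rw [← Real.exp_nat_mul]
          norm_num
  have hVlt : V < ⊤ := measure_ball_lt_top
  have hgm : Measurable fun t : ℝ => ENNReal.ofReal (Real.exp (-(4*t))) * V :=
    (ENNReal.measurable_ofReal.comp
      (Real.measurable_exp.comp (measurable_const.mul measurable_id).neg)).mul_const V
  calc ∫⁻ t in Ioi (0:ℝ), (volume.restrict (ball c 1)) {a : E4 | t < -Real.log ‖a - c‖}
      ≤ ∫⁻ t in Ioi (0:ℝ), ENNReal.ofReal (Real.exp (-(4*t))) * V :=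
        setLIntegral_mono hgm key
    _ = (∫⁻ t in Ioi (0:ℝ), ENNReal.ofReal (Real.exp (-(4*t)))) * V :=
        lintegral_mul_const V (ENNReal.measurable_ofReal.comp
          (Real.measurable_exp.comp (measurable_const.mul measurable_id).neg))
    _ < ⊤ := by
        refine ENNReal.mul_lt_top ?_ hVlt
        have hi : IntegrableOn (fun t : ℝ => Real.exp (-4 * t)) (Ioi (0:ℝ)) :=
          exp_neg_integrableOn_Ioi 0 (by norm_num)
        have := hi.lintegral_lt_top
        simpa [neg_mul] using this

lemma integrableOn_log_ball (c : E4) (R : ℝ) :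
    IntegrableOn (fun y : E4 => Real.log ‖y - c‖) (ball c R) := by
  have hmeas : Measurable (fun y : E4 => Real.log ‖y - c‖) :=
    Real.measurable_log.comp ((measurable_id.sub measurable_const).norm)
  set R' := max R 1 with hR'
  have hR1 : (1:ℝ) ≤ R' := le_max_right _ _
  refine IntegrableOn.mono_set ?_ (ball_subset_ball (le_max_left R 1))
  have hcover : ball c R' = ball c 1 ∪ (ball c R' \ ball c 1) :=
    (Set.union_diff_cancel (ball_subset_ball hR1)).symm
  rw [hcover, integrableOn_union]
  refine ⟨integrableOn_log_ball_one c, ?_⟩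
  have hmfin : volume (ball c R' \ ball c 1) < ⊤ :=
    lt_of_le_of_lt (measure_mono diff_subset) measure_ball_lt_top
  refine Integrable.mono' (g := fun _ : E4 => Real.log R')
    (integrableOn_const hmfin.ne) hmeas.aestronglyMeasurable.restrict ?_
  refine (ae_restrict_iff' (measurableSet_ball.diff measurableSet_ball)).2
    (ae_of_all _ fun y hy => ?_)
  obtain ⟨hy1, hy2⟩ := hy
  rw [mem_ball, dist_eq_norm] at hy1
  rw [mem_ball, dist_eq_norm, not_lt] at hy2
  rw [Real.norm_eq_abs, abs_of_nonneg (Real.log_nonneg hy2)]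
  exact (Real.log_le_log_iff (by linarith) (by linarith)).2 hy1.le

theorem logPot_upper_bound (p : ℝ) (hp : 0 < p) (u : E4 → ℝ) (hu : IsSolution p u) :
    ∃ C : ℝ, ∀ x : E4, 4 ≤ ‖x‖ →
      logPot p u x ≤ -(QCurv p u / (8 * π ^ 2)) * Real.log ‖x‖ + C := by
  set f : E4 → ℝ := fun y => (1 - ‖y‖ ^ p) * Real.exp (4 * u y) with hfdef
  have hf : Integrable f := hu.2.2
  have hfc : Continuous f := by
    have h1 : Continuous fun y : E4 => ‖y‖ ^ p := by
      rw [continuous_iff_continuousAt]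
      exact fun y => (Real.continuousAt_rpow_const ‖y‖ p (Or.inr hp.le)).comp
        continuous_norm.continuousAt
    exact (continuous_const.sub h1).mul
      (Real.continuous_exp.comp (continuous_const.mul hu.1.continuous))
  refine ⟨Real.log 2 * (∫ y : E4, |f y|) / (8 * π ^ 2), fun x hx => ?_⟩
  have hx0 : (0:ℝ) < ‖x‖ := by linarith
  have hmeash : Measurable fun y : E4 => Real.log (‖y‖ / ‖x - y‖) * f y :=
    (Real.measurable_log.comp (measurable_norm.div
      ((measurable_const.sub measurable_id).norm))).mul hfc.measurable
  -- Integrability of the integrand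
  have h_int : Integrable (fun y : E4 => Real.log (‖y‖ / ‖x - y‖) * f y) := by
    set s : Set E4 := ball (0:E4) (2 * ‖x‖) with hs
    have houter : IntegrableOn (fun y : E4 => Real.log (‖y‖ / ‖x - y‖) * f y) sᶜ := by
      refine Integrable.mono' ((hf.norm.const_mul (Real.log 2)).integrableOn)
        hmeash.aestronglyMeasurable.restrict ?_
      refine (ae_restrict_iff' measurableSet_ball.compl).2 (ae_of_all _ fun y hy => ?_)
      rw [Set.mem_compl_iff, mem_ball_zero_iff, not_lt] at hy
      have hlb : ‖y‖ / 2 ≤ ‖x - y‖ := by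
        have h1 : ‖y‖ - ‖x‖ ≤ ‖y - x‖ := norm_sub_norm_le y x
        rw [norm_sub_rev] at h1
        linarith
      have hub : ‖x - y‖ ≤ 2 * ‖y‖ := le_trans (norm_sub_le x y) (by linarith)
      have hxyp : (0:ℝ) < ‖x - y‖ := by linarith
      have hrp : (0:ℝ) < ‖y‖ / ‖x - y‖ := div_pos (by linarith) hxyp
      have habs : |Real.log (‖y‖ / ‖x - y‖)| ≤ Real.log 2 := by
        rw [abs_le]
        constructor
        · have h2 : (1:ℝ)/2 ≤ ‖y‖ / ‖x - y‖ := by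
            rw [le_div_iff₀ hxyp]; linarith
          have := (Real.log_le_log_iff (by norm_num) hrp).2 h2
          rwa [one_div, Real.log_inv] at this
        · refine (Real.log_le_log_iff hrp (by norm_num)).2 ?_
          rw [div_le_iff₀ hxyp]; linarith
      rw [norm_mul, Real.norm_eq_abs]
      exact mul_le_mul_of_nonneg_right habs (norm_nonneg _)
    have hinner : IntegrableOn (fun y : E4 => Real.log (‖y‖ / ‖x - y‖) * f y) s := by
      obtain ⟨M, hM⟩ := (isCompact_closedBall (0:E4) (2 * ‖x‖)).exists_bound_of_continuousOn
        hfc.continuousOn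
      have hM0 : 0 ≤ M :=
        le_trans (norm_nonneg (f 0)) (hM 0 (mem_closedBall_self (by positivity)))
      have hg1 : IntegrableOn (fun y : E4 => Real.log ‖y‖) s := by
        simpa using integrableOn_log_ball 0 (2 * ‖x‖)
      have hg2 : IntegrableOn (fun y : E4 => Real.log ‖x - y‖) s := by
        have hsub : s ⊆ ball x (3 * ‖x‖) := by
          intro y hy
          rw [mem_ball_zero_iff] at hy
          rw [mem_ball, dist_eq_norm]
          calc ‖y - x‖ ≤ ‖y‖ + ‖x‖ := norm_sub_le y x
            _ < 3 * ‖x‖ := by linarith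
        have := (integrableOn_log_ball x (3 * ‖x‖)).mono_set hsub
        simpa [norm_sub_rev] using this
      refine Integrable.mono' (((hg1.abs.add hg2.abs).mul_const M))
        hmeash.aestronglyMeasurable.restrict ?_
      refine (ae_restrict_iff' measurableSet_ball).2 (ae_of_all _ fun y hy => ?_)
      have hfyM : |f y| ≤ M := by
        rw [← Real.norm_eq_abs]
        exact hM y (ball_subset_closedBall hy)
      have habs : |Real.log (‖y‖ / ‖x - y‖)| ≤ |Real.log ‖y‖| + |Real.log ‖x - y‖| := by
        rcases eq_or_ne ‖y‖ 0 with h0 | h0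
        · rw [h0, zero_div, Real.log_zero, abs_zero]; positivity
        rcases eq_or_ne ‖x - y‖ 0 with h1 | h1
        · rw [h1, div_zero, Real.log_zero, abs_zero]; positivity
        rw [Real.log_div h0 h1]
        exact abs_sub _ _
      rw [norm_mul, Real.norm_eq_abs, Real.norm_eq_abs]
      exact mul_le_mul habs hfyM (abs_nonneg _) (add_nonneg (abs_nonneg _) (abs_nonneg _))
    rw [← integrableOn_univ, ← Set.union_compl_self s, integrableOn_union]
    exact ⟨hinner, houter⟩
  -- pointwise (a.e.) upper bound
  have hae : ∀ᵐ y : E4, (Real.log (‖y‖ / ‖x - y‖) + Real.log ‖x‖) * f y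
      ≤ Real.log 2 * |f y| := by
    have h0 : ∀ᵐ y : E4, y ≠ 0 := by
      rw [ae_iff]
      simpa [Set.setOf_eq_eq_singleton] using measure_singleton (0 : E4)
    have h1 : ∀ᵐ y : E4, y ≠ x := by
      rw [ae_iff]
      simpa [Set.setOf_eq_eq_singleton] using measure_singleton x
    filter_upwards [h0, h1] with y hy0 hyx
    have hy0p : (0:ℝ) < ‖y‖ := norm_pos_iff.2 hy0
    have hxyp : (0:ℝ) < ‖x - y‖ := norm_pos_iff.2 (sub_ne_zero.2 (Ne.symm hyx))
    rw [Real.log_div hy0p.ne' hxyp.ne']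
    rcases lt_trichotomy (f y) 0 with hfy | hfy | hfy
    · have hyp1 : 1 < ‖y‖ := by
        have h2 : 1 - ‖y‖ ^ p < 0 := by
          by_contra hcon
          push_neg at hcon
          exact absurd (mul_nonneg hcon (Real.exp_pos _).le) (not_le.2 hfy)
        by_contra hcon
        push_neg at hcon
        have := Real.rpow_le_one (norm_nonneg y) hcon hp.le
        linarith
      have hub : ‖x - y‖ ≤ 2 * (‖x‖ * ‖y‖) := by
        calc ‖x - y‖ ≤ ‖x‖ + ‖y‖ := norm_sub_le x y
          _ ≤ 2 * (‖x‖ * ‖y‖) := by nlinarith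
      have hlog : Real.log ‖x - y‖ ≤ Real.log 2 + (Real.log ‖x‖ + Real.log ‖y‖) := by
        have h3 := (Real.log_le_log_iff hxyp (by positivity)).2 hub
        rwa [Real.log_mul two_ne_zero (by positivity : ‖x‖ * ‖y‖ ≠ 0),
          Real.log_mul hx0.ne' hy0p.ne'] at h3
      have hL : -Real.log 2 ≤ Real.log ‖y‖ - Real.log ‖x - y‖ + Real.log ‖x‖ := by linarith
      rw [abs_of_neg hfy]
      have h4 := mul_le_mul_of_nonpos_right hL hfy.le
      have h5 : -Real.log 2 * f y = Real.log 2 * -f y := by ring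
      linarith
    · rw [hfy]; simp
    · have hylt1 : ‖y‖ < 1 := by
        have h2 : 0 < 1 - ‖y‖ ^ p := by
          by_contra hcon
          push_neg at hcon
          exact absurd (mul_nonpos_of_nonpos_of_nonneg hcon (Real.exp_pos _).le)
            (not_le.2 hfy)
        by_contra hcon
        push_neg at hcon
        have := Real.one_le_rpow hcon hp.le
        linarith
      have hlb : ‖x‖ / 2 ≤ ‖x - y‖ := by
        have h3 : ‖x‖ - ‖y‖ ≤ ‖x - y‖ := norm_sub_norm_le x y
        linarith
      have hlog : Real.log ‖x‖ - Real.log 2 ≤ Real.log ‖x - y‖ := by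
        have h3 := (Real.log_le_log_iff (by positivity) hxyp).2 hlb
        rwa [Real.log_div hx0.ne' two_ne_zero] at h3
      have hLy : Real.log ‖y‖ ≤ 0 := Real.log_nonpos (norm_nonneg _) hylt1.le
      have hL : Real.log ‖y‖ - Real.log ‖x - y‖ + Real.log ‖x‖ ≤ Real.log 2 := by linarith
      rw [abs_of_pos hfy]
      exact mul_le_mul_of_nonneg_right hL hfy.le
  -- put everything together
  have hsum : Integrable (fun y : E4 =>
      (Real.log (‖y‖ / ‖x - y‖) + Real.log ‖x‖) * f y) := by
    have := h_int.add (hf.const_mul (Real.log ‖x‖))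
    refine this.congr (ae_of_all _ fun y => ?_)
    simp only [Pi.add_apply]; ring
  have hmono := integral_mono_ae hsum (hf.abs.const_mul (Real.log 2)) hae
  rw [integral_const_mul] at hmono
  have hsplit : ∫ y : E4, (Real.log (‖y‖ / ‖x - y‖) + Real.log ‖x‖) * f y
      = (∫ y : E4, Real.log (‖y‖ / ‖x - y‖) * f y) + Real.log ‖x‖ * ∫ y : E4, f y := by
    simp_rw [add_mul]
    rw [integral_add h_int (hf.const_mul _), integral_const_mul]
  have hQ : QCurv p u = ∫ y : E4, f y := rfl
  have hL : logPot p u x = (1 / (8 * π ^ 2)) * ∫ y : E4, Real.log (‖y‖ / ‖x - y‖) * f y := rfl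
  have hkey : ∫ y : E4, Real.log (‖y‖ / ‖x - y‖) * f y
      ≤ Real.log 2 * (∫ y : E4, |f y|) - Real.log ‖x‖ * QCurv p u := by
    rw [hQ]; linarith [hsplit ▸ hmono]
  have hpos : (0:ℝ) < 8 * π ^ 2 := by positivity
  rw [hL]
  have := mul_le_mul_of_nonneg_left hkey (le_of_lt (by positivity : (0:ℝ) < 1 / (8 * π ^ 2)))
  calc (1 / (8 * π ^ 2)) * ∫ y : E4, Real.log (‖y‖ / ‖x - y‖) * f y
      ≤ (1 / (8 * π ^ 2)) * (Real.log 2 * (∫ y : E4, |f y|) - Real.log ‖x‖ * QCurv p u) := this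
    _ = -(QCurv p u / (8 * π ^ 2)) * Real.log ‖x‖
        + Real.log 2 * (∫ y : E4, |f y|) / (8 * π ^ 2) := by ring
end
end

section
/- Let u be a solution to the problem Δ²u = (1 − |x|^p)e^{4u} on ℝ⁴ with x ↦ (1 − |x|^p)e^{4u(x)} integrable, and let v be the associated logarithmic potential. For every ε > 0 there exists R = R(ε) > 0 such that for all x with |x| ≥ R, v(x) ≥ −((Λ + 5ε)/(8π²))·log|x| − (1/(8π²)) ∫_{B₁(x)} log(|x − y|)(1 − |y|^p)e^{4u(y)} dy. -/
open MeasureTheory Real Filter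

noncomputable section

section Aux

open Metric Set

/-- The logarithm of the norm is integrable on the unit ball of `ℝ⁴`. -/
lemma intOn_log : IntegrableOn (fun y : E4 => Real.log ‖y‖) (closedBall 0 1) volume := by
  constructor
  · exact (Real.measurable_log.comp measurable_norm).aestronglyMeasurable
  · rw [hasFiniteIntegral_iff_norm]
    have h1 : ∀ᵐ y ∂(volume.restrict (closedBall (0:E4) 1)),
        ENNReal.ofReal ‖Real.log ‖y‖‖ = ENNReal.ofReal (-Real.log ‖y‖) := by
      filter_upwards [ae_restrict_mem measurableSet_closedBall] with y hy
      rw [Real.norm_eq_abs, abs_of_nonpos (Real.log_nonpos (norm_nonneg y)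
        (mem_closedBall_zero_iff.mp hy))]
    rw [lintegral_congr_ae h1]
    rw [lintegral_eq_lintegral_meas_le _ ?_ ?_]
    · calc ∫⁻ t in Ioi 0, (volume.restrict (closedBall (0:E4) 1)) {a | t ≤ -Real.log ‖a‖}
          ≤ ∫⁻ t in Ioi 0, ENNReal.ofReal (Real.exp (-4*t)) * volume (ball (0:E4) 1) := by
            apply lintegral_mono_ae
            filter_upwards [ae_restrict_mem measurableSet_Ioi] with t ht
            have hsub : {a : E4 | t ≤ -Real.log ‖a‖} ⊆ closedBall 0 (Real.exp (-t)) := by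
              intro a ha
              rw [mem_closedBall_zero_iff]
              by_contra hgt
              push_neg at hgt
              have := Real.log_lt_log (Real.exp_pos _) hgt
              rw [Real.log_exp] at this
              simp only [mem_setOf_eq] at ha
              linarith
            calc (volume.restrict (closedBall (0:E4) 1)) {a | t ≤ -Real.log ‖a‖}
                ≤ volume {a : E4 | t ≤ -Real.log ‖a‖} := Measure.restrict_le_self _
              _ ≤ volume (closedBall (0:E4) (Real.exp (-t))) := measure_mono hsub
              _ = ENNReal.ofReal (Real.exp (-t) ^ Module.finrank ℝ E4) * volume (ball (0:E4) 1) :=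
                  Measure.addHaar_closedBall _ _ (Real.exp_pos _).le
              _ = ENNReal.ofReal (Real.exp (-4*t)) * volume (ball (0:E4) 1) := by
                  congr 1
                  have : Module.finrank ℝ E4 = 4 := by simp
                  rw [this, ← Real.exp_nat_mul]
                  congr 1
                  push_cast
                  ring
          _ < ⊤ := by
            rw [lintegral_mul_const' _ _ measure_ball_lt_top.ne]
            exact ENNReal.mul_lt_top
              ((exp_neg_integrableOn_Ioi 0 (by norm_num : (0:ℝ) < 4)).setLIntegral_lt_top)
              measure_ball_lt_top
    · filter_upwards [ae_restrict_mem measurableSet_closedBall] with y hy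
      simpa using Real.log_nonpos (norm_nonneg y) (mem_closedBall_zero_iff.mp hy)
    · exact ((Real.measurable_log.comp measurable_norm).neg).aemeasurable

/-- Translated version. -/
lemma intOn_log' (x : E4) :
    IntegrableOn (fun y : E4 => Real.log ‖x - y‖) (closedBall x 1) volume := by
  have mp : MeasurePreserving (fun y : E4 => x - y) volume volume :=
    Measure.measurePreserving_sub_left volume x
  have hemb : MeasurableEmbedding (fun y : E4 => x - y) :=
    (Homeomorph.subLeft x).measurableEmbedding
  have hpre : (fun y : E4 => x - y) ⁻¹' (closedBall 0 1) = closedBall x 1 := by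
    ext y
    simp [mem_closedBall, dist_eq_norm, norm_sub_rev]
  have := (mp.integrableOn_comp_preimage hemb (s := closedBall 0 1)
    (f := fun z : E4 => Real.log ‖z‖)).mpr intOn_log
  rw [hpre] at this
  exact this

end Aux

set_option maxHeartbeats 1000000 in
open Metric Set in
theorem logPot_lower_bound (p : ℝ) (hp : 0 < p) (u : E4 → ℝ) (hu : IsSolution p u) :
    ∀ ε > (0 : ℝ), ∃ R > (0 : ℝ), ∀ x : E4, R ≤ ‖x‖ →
      logPot p u x ≥ -((QCurv p u + 5 * ε) / (8 * π ^ 2)) * Real.log ‖x‖ -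
        (1 / (8 * π ^ 2)) * ∫ y in Metric.ball x 1,
          Real.log ‖x - y‖ * ((1 - ‖y‖ ^ p) * Real.exp (4 * u y)) := by
  obtain ⟨hreg, -, hf_int⟩ := hu
  intro ε hε
  set f : E4 → ℝ := fun y => (1 - ‖y‖ ^ p) * Real.exp (4 * u y) with hf_def
  have hf_cont : Continuous f := by
    apply Continuous.mul
    · exact continuous_const.sub (continuous_norm.rpow_const (fun y => Or.inr hp.le))
    · exact Real.continuous_exp.comp (continuous_const.mul hreg.continuous)
  have hf_meas : Measurable f := hf_cont.measurable
  have hf_nonneg : ∀ y : E4, ‖y‖ ≤ 1 → 0 ≤ f y := fun y hy =>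
    mul_nonneg (by have := Real.rpow_le_one (norm_nonneg y) hy hp.le; linarith)
      (Real.exp_pos _).le
  have hf_nonpos : ∀ y : E4, 1 ≤ ‖y‖ → f y ≤ 0 := fun y hy =>
    mul_nonpos_of_nonpos_of_nonneg
      (by have := Real.one_le_rpow hy hp.le; linarith) (Real.exp_pos _).le
  have habs : Integrable (fun y : E4 => |f y|) := hf_int.abs
  -- choose a radius capturing all but ε/2 of the mass of |f|
  obtain ⟨R₀, hR₀, htail⟩ :
      ∃ R₀ : ℝ, 1 ≤ R₀ ∧ ∫ y in (closedBall (0:E4) R₀)ᶜ, |f y| < ε/2 := by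
    have hmono : Monotone (fun n : ℕ => closedBall (0:E4) n) := fun a b hab =>
      closedBall_subset_closedBall (by exact_mod_cast hab)
    have hunion : (⋃ n : ℕ, closedBall (0:E4) (n : ℝ)) = univ := by
      ext y
      simp only [mem_iUnion, mem_univ, iff_true, mem_closedBall_zero_iff]
      exact exists_nat_ge ‖y‖
    have ht := tendsto_setIntegral_of_monotone (fun n : ℕ => measurableSet_closedBall)
      hmono (by rw [hunion]; exact habs.integrableOn)
    rw [hunion, setIntegral_univ] at ht
    have hev := ht.eventually (eventually_gt_nhds
      (show (∫ y : E4, |f y|) - ε/2 < ∫ y : E4, |f y| by linarith))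
    obtain ⟨n, hn1, hn2⟩ := ((eventually_ge_atTop 1).and hev).exists
    refine ⟨(n : ℝ), by exact_mod_cast hn1, ?_⟩
    have hsplit := integral_add_compl (measurableSet_closedBall
      (x := (0:E4)) (ε := (n:ℝ))) habs
    linarith
  -- fixed sets and constants
  set B : Set E4 := closedBall (0:E4) R₀ with hB_def
  set s1 : Set E4 := closedBall (0:E4) 1 with hs1_def
  set s2 : Set E4 := B \ s1 with hs2_def
  have hs1m : MeasurableSet s1 := measurableSet_closedBall
  have hs2m : MeasurableSet s2 := measurableSet_closedBall.diff measurableSet_closedBall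
  have hBm : MeasurableSet B := measurableSet_closedBall
  have hsub1B : s1 ⊆ B := closedBall_subset_closedBall (by linarith)
  set C₀ : ℝ := ∫ y in s1, |Real.log ‖y‖| * f y with hC₀_def
  set S : ℝ := ∫ y in s1, f y with hS_def
  set T : ℝ := ∫ y in s2, f y with hT_def
  set K : ℝ := -C₀ - S * Real.log 2 + T * Real.log (2*R₀) with hK_def
  refine ⟨max (2*R₀+2) (max 3 (Real.exp (|K|/ε))),
    lt_of_lt_of_le (by norm_num : (0:ℝ) < 3) ((le_max_left 3 _).trans (le_max_right _ _)), ?_⟩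
  intro x hx
  have hx1 : 2*R₀+2 ≤ ‖x‖ := le_trans (le_max_left _ _) hx
  have hx3 : (3:ℝ) ≤ ‖x‖ := le_trans ((le_max_left 3 _).trans (le_max_right _ _)) hx
  have hx0 : (0:ℝ) < ‖x‖ := by linarith
  set l : ℝ := Real.log ‖x‖ with hl_def
  have hlx : 0 ≤ l := Real.log_nonneg (by linarith)
  have hKl : -(ε*l) ≤ K := by
    have h1 : Real.exp (|K|/ε) ≤ ‖x‖ :=
      le_trans ((le_max_right 3 _).trans (le_max_right _ _)) hx
    have h2 : |K|/ε ≤ l := by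
      calc |K|/ε = Real.log (Real.exp (|K|/ε)) := (Real.log_exp _).symm
        _ ≤ l := Real.log_le_log (Real.exp_pos _) h1
    have h3 : |K| ≤ ε*l := by
      rw [div_le_iff₀ hε] at h2; linarith [h2]
    linarith [neg_abs_le K]
  -- the sets depending on x
  set s4 : Set E4 := ball x 1 with hs4_def
  set s3 : Set E4 := Bᶜ \ s4 with hs3_def
  have hs4m : MeasurableSet s4 := measurableSet_ball
  have hs3m : MeasurableSet s3 := hBm.compl.diff hs4m
  -- norm estimates on s4
  have hs4norm : ∀ y ∈ s4, ‖x - y‖ < 1 ∧ ‖x‖ - 1 ≤ ‖y‖ ∧ ‖y‖ ≤ ‖x‖ + 1 := by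
    intro y hy
    have h1 : ‖x - y‖ < 1 := by
      have := mem_ball.mp hy
      rwa [dist_eq_norm, norm_sub_rev] at this
    refine ⟨h1, ?_, ?_⟩
    · have := norm_sub_norm_le x y; linarith
    · have h2 : ‖y‖ - ‖x‖ ≤ ‖y - x‖ := norm_sub_norm_le y x
      rw [norm_sub_rev] at h2; linarith
  have hsub4 : s4 ⊆ Bᶜ := by
    intro y hy
    obtain ⟨-, h2, -⟩ := hs4norm y hy
    simp only [hB_def, mem_compl_iff, mem_closedBall_zero_iff, not_le]
    linarith
  -- the integrand
  set g : E4 → ℝ := fun y => Real.log (‖y‖ / ‖x - y‖) * f y with hg_def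
  have hg_meas : Measurable g :=
    (Real.measurable_log.comp (measurable_norm.div
      (measurable_const.sub measurable_id).norm)).mul hf_meas
  -- a bound for f on B and on closedBall x 1
  obtain ⟨M₀, hM₀⟩ := (isCompact_closedBall (0:E4) R₀).exists_bound_of_continuousOn
    hf_cont.continuousOn
  obtain ⟨M₄, hM₄⟩ := (isCompact_closedBall x 1).exists_bound_of_continuousOn
    hf_cont.continuousOn
  simp only [Real.norm_eq_abs] at hM₀ hM₄
  -- bounded multiplier helper
  have bdd_mul : ∀ (s : Set E4), MeasurableSet s → ∀ (g0 : E4 → ℝ),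
      IntegrableOn g0 s volume → ∀ (M : ℝ), (∀ y ∈ s, |f y| ≤ M) →
      IntegrableOn (fun y => g0 y * f y) s volume := by
    intro s hs g0 hg0 M hM
    refine Integrable.mono (hg0.abs.const_mul M)
      (hg0.aestronglyMeasurable.mul (hf_cont.aestronglyMeasurable.restrict)) ?_
    rw [ae_restrict_iff' hs]
    refine ae_of_all _ fun y hy => ?_
    simp only [Real.norm_eq_abs, abs_mul, abs_abs]
    calc |g0 y| * |f y| ≤ |g0 y| * |M| :=
          mul_le_mul_of_nonneg_left ((hM y hy).trans (le_abs_self M)) (abs_nonneg _)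
      _ = |M| * |g0 y| := mul_comm _ _
  -- pointwise norm facts on s1
  have hs1pt : ∀ y ∈ s1, y ≠ 0 → 0 < ‖y‖ ∧ 0 < ‖x - y‖ ∧ ‖x - y‖ ≤ 2*‖x‖ ∧
      Real.log (‖y‖ / ‖x - y‖) = Real.log ‖y‖ - Real.log ‖x - y‖ ∧
      |Real.log ‖x - y‖| ≤ Real.log (2*‖x‖) := by
    intro y hy hy0
    have hy1 : ‖y‖ ≤ 1 := mem_closedBall_zero_iff.mp hy
    have hyp : 0 < ‖y‖ := norm_pos_iff.mpr hy0
    have hlb : ‖x‖ - 1 ≤ ‖x - y‖ := by have := norm_sub_norm_le x y; linarith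
    have hxyp : 0 < ‖x - y‖ := by linarith
    have hub : ‖x - y‖ ≤ 2*‖x‖ := by have := norm_sub_le x y; linarith
    refine ⟨hyp, hxyp, hub, Real.log_div hyp.ne' hxyp.ne', ?_⟩
    have h1 : 0 ≤ Real.log ‖x - y‖ := Real.log_nonneg (by linarith)
    rw [abs_of_nonneg h1]
    exact Real.log_le_log hxyp hub
  -- integrability on s1
  have hM₀1 : ∀ y ∈ s1, |f y| ≤ M₀ := fun y hy => hM₀ y (hsub1B hy)
  have hi_logf1 : IntegrableOn (fun y => Real.log ‖y‖ * f y) s1 volume :=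
    bdd_mul s1 hs1m _ intOn_log M₀ hM₀1
  have hi_abslogf1 : IntegrableOn (fun y => |Real.log ‖y‖| * f y) s1 volume :=
    bdd_mul s1 hs1m _ intOn_log.abs M₀ hM₀1
  have hi_fs : ∀ s : Set E4, IntegrableOn f s volume := fun s => hf_int.integrableOn
  have hi_r1 : IntegrableOn
      (fun y => Real.log ‖y‖ * f y - Real.log (2*‖x‖) * f y) s1 volume :=
    hi_logf1.sub ((hi_fs s1).const_mul _)
  have hi_g1 : IntegrableOn g s1 volume := by
    have hdom1 : IntegrableOn (fun y : E4 => (|Real.log ‖y‖| + Real.log (2*‖x‖)) * M₀)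
        s1 volume :=
      (intOn_log.abs.add (integrableOn_const measure_closedBall_lt_top.ne)).mul_const M₀
    refine Integrable.mono hdom1 (hg_meas.aestronglyMeasurable.restrict) ?_
    rw [ae_restrict_iff' hs1m]
    refine ae_of_all _ fun y hy => ?_
    by_cases hy0 : y = 0
    · subst hy0
      have h0 : g 0 = 0 := by simp [hg_def]
      rw [h0, norm_zero]
      positivity
    · obtain ⟨hyp, hxyp, hub, hdiv, habslog⟩ := hs1pt y hy hy0
      simp only [hg_def, Real.norm_eq_abs]
      have hL : |Real.log (‖y‖ / ‖x - y‖)| ≤ |Real.log ‖y‖| + Real.log (2*‖x‖) := by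
        rw [hdiv]
        calc |Real.log ‖y‖ - Real.log ‖x - y‖|
            ≤ |Real.log ‖y‖| + |Real.log ‖x - y‖| := abs_sub _ _
          _ ≤ |Real.log ‖y‖| + Real.log (2*‖x‖) := by linarith
      calc |Real.log (‖y‖ / ‖x - y‖) * f y|
          = |Real.log (‖y‖ / ‖x - y‖)| * |f y| := abs_mul _ _
        _ ≤ (|Real.log ‖y‖| + Real.log (2*‖x‖)) * M₀ :=
            mul_le_mul hL (hM₀1 y hy) (abs_nonneg _)
              (le_trans (abs_nonneg _) hL)
        _ ≤ |(|Real.log ‖y‖| + Real.log (2*‖x‖)) * M₀| := le_abs_self _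
  -- pointwise inequality on s1
  have P1 : ∀ y ∈ s1, Real.log ‖y‖ * f y - Real.log (2*‖x‖) * f y ≤ g y := by
    intro y hy
    have hfy : 0 ≤ f y := hf_nonneg y (mem_closedBall_zero_iff.mp hy)
    by_cases hy0 : y = 0
    · subst hy0
      have hg0 : g 0 = 0 := by simp [hg_def]
      rw [hg0]
      simp only [norm_zero, Real.log_zero, zero_mul, zero_sub]
      have h1 : 0 ≤ Real.log (2*‖x‖) := Real.log_nonneg (by linarith)
      have := mul_nonneg h1 hfy
      linarith
    · obtain ⟨hyp, hxyp, hub, hdiv, -⟩ := hs1pt y hy hy0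
      have hlog : Real.log ‖x - y‖ ≤ Real.log (2*‖x‖) := Real.log_le_log hxyp hub
      have := mul_le_mul_of_nonneg_right
        (sub_le_sub_left hlog (Real.log ‖y‖)) hfy
      simp only [hg_def]
      rw [hdiv]
      linarith [this]
  have J1 : -C₀ - Real.log (2*‖x‖) * S ≤ ∫ y in s1, g y := by
    have step1 := setIntegral_mono_on hi_r1 hi_g1 hs1m P1
    have step2 : ∫ y in s1, (Real.log ‖y‖ * f y - Real.log (2*‖x‖) * f y) =
        (∫ y in s1, Real.log ‖y‖ * f y) - Real.log (2*‖x‖) * S := by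
      rw [integral_sub hi_logf1 ((hi_fs s1).const_mul _), integral_const_mul]
    have step3 : -C₀ ≤ ∫ y in s1, Real.log ‖y‖ * f y := by
      have hpt : ∀ y ∈ s1, -(|Real.log ‖y‖| * f y) ≤ Real.log ‖y‖ * f y := by
        intro y hy
        have hfy : 0 ≤ f y := hf_nonneg y (mem_closedBall_zero_iff.mp hy)
        linarith [mul_le_mul_of_nonneg_right (neg_abs_le (Real.log ‖y‖)) hfy]
      have hneg : IntegrableOn (fun y : E4 => -(|Real.log ‖y‖| * f y)) s1 volume :=
        hi_abslogf1.neg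
      have h := setIntegral_mono_on hneg hi_logf1 hs1m hpt
      rwa [integral_neg] at h
    linarith
  -- s2 : pointwise facts
  have hs2pt : ∀ y ∈ s2, 1 < ‖y‖ ∧ ‖y‖ ≤ R₀ ∧ ‖x‖ - R₀ ≤ ‖x - y‖ ∧ ‖x - y‖ ≤ ‖x‖ + R₀ := by
    intro y hy
    obtain ⟨hyB, hyns1⟩ := hy
    have h1 : 1 < ‖y‖ := by
      by_contra h
      push_neg at h
      exact hyns1 (mem_closedBall_zero_iff.mpr h)
    have h2 : ‖y‖ ≤ R₀ := mem_closedBall_zero_iff.mp hyB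
    have h3 : ‖x‖ - R₀ ≤ ‖x - y‖ := by have := norm_sub_norm_le x y; linarith
    have h4 : ‖x - y‖ ≤ ‖x‖ + R₀ := by have := norm_sub_le x y; linarith
    exact ⟨h1, h2, h3, h4⟩
  have hi_g2 : IntegrableOn g s2 volume := by
    have hdom2 : IntegrableOn (fun _ : E4 => (Real.log R₀ + Real.log (‖x‖+R₀)) * M₀)
        s2 volume :=
      integrableOn_const (lt_of_le_of_lt (measure_mono diff_subset)
        measure_closedBall_lt_top).ne
    refine Integrable.mono hdom2 (hg_meas.aestronglyMeasurable.restrict) ?_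
    rw [ae_restrict_iff' hs2m]
    refine ae_of_all _ fun y hy => ?_
    obtain ⟨h1, h2, h3, h4⟩ := hs2pt y hy
    have hyp : (0:ℝ) < ‖y‖ := by linarith
    have hxyp : (0:ℝ) < ‖x - y‖ := by linarith
    have hdiv := Real.log_div hyp.ne' hxyp.ne'
    have hb1 : |Real.log ‖y‖| ≤ Real.log R₀ := by
      rw [abs_of_nonneg (Real.log_nonneg h1.le)]
      exact Real.log_le_log hyp h2
    have hb2 : |Real.log ‖x - y‖| ≤ Real.log (‖x‖+R₀) := by
      rw [abs_of_nonneg (Real.log_nonneg (by linarith))]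
      exact Real.log_le_log hxyp h4
    have hfy : |f y| ≤ M₀ := hM₀ y hy.1
    have hM₀0 : (0:ℝ) ≤ M₀ := le_trans (abs_nonneg _) hfy
    simp only [hg_def, Real.norm_eq_abs]
    have hL : |Real.log (‖y‖ / ‖x - y‖)| ≤ Real.log R₀ + Real.log (‖x‖+R₀) := by
      rw [hdiv]
      calc |Real.log ‖y‖ - Real.log ‖x - y‖|
          ≤ |Real.log ‖y‖| + |Real.log ‖x - y‖| := abs_sub _ _
        _ ≤ Real.log R₀ + Real.log (‖x‖+R₀) := by linarith
    calc |Real.log (‖y‖ / ‖x - y‖) * f y|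
        = |Real.log (‖y‖ / ‖x - y‖)| * |f y| := abs_mul _ _
      _ ≤ (Real.log R₀ + Real.log (‖x‖+R₀)) * M₀ :=
          mul_le_mul hL hfy (abs_nonneg _) (le_trans (abs_nonneg _) hL)
      _ ≤ |(Real.log R₀ + Real.log (‖x‖+R₀)) * M₀| := le_abs_self _
  have P2 : ∀ y ∈ s2, (Real.log (2*R₀) - l) * f y ≤ g y := by
    intro y hy
    obtain ⟨h1, h2, h3, h4⟩ := hs2pt y hy
    have hyp : (0:ℝ) < ‖y‖ := by linarith
    have hxyp : (0:ℝ) < ‖x - y‖ := by linarith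
    have hfy : f y ≤ 0 := hf_nonpos y h1.le
    have hratio : ‖y‖ / ‖x - y‖ ≤ 2*R₀/‖x‖ := by
      rw [div_le_div_iff₀ hxyp hx0]
      have hhalf : ‖x‖/2 ≤ ‖x - y‖ := by linarith
      have hm1 : ‖y‖ * ‖x‖ ≤ R₀ * ‖x‖ := mul_le_mul_of_nonneg_right h2 hx0.le
      have hm2 : 2*R₀ * (‖x‖/2) ≤ 2*R₀ * ‖x - y‖ :=
        mul_le_mul_of_nonneg_left hhalf (by positivity)
      linarith
    have hlog : Real.log (‖y‖ / ‖x - y‖) ≤ Real.log (2*R₀) - l := by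
      have := Real.log_le_log (div_pos hyp hxyp) hratio
      rwa [Real.log_div (by positivity) hx0.ne'] at this
    simp only [hg_def]
    exact mul_le_mul_of_nonpos_right hlog hfy
  have J2 : (Real.log (2*R₀) - l) * T ≤ ∫ y in s2, g y := by
    have := setIntegral_mono_on ((hi_fs s2).const_mul _) hi_g2 hs2m P2
    rwa [integral_const_mul] at this
  -- s3 pointwise facts
  have hs3pt : ∀ y ∈ s3, R₀ < ‖y‖ ∧ 1 ≤ ‖x - y‖ := by
    intro y hy
    obtain ⟨hyBc, hyns4⟩ := hy
    constructor
    · simp only [hB_def, mem_compl_iff, mem_closedBall_zero_iff, not_le] at hyBc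
      exact hyBc
    · by_contra h
      push_neg at h
      apply hyns4
      rw [hs4_def, mem_ball, dist_eq_norm, norm_sub_rev]
      -- need strict: ‖x - y‖ < 1; h : ‖x - y‖ < 1 after push_neg? h : ‖x-y‖ < 1
      exact h
  have hL3 : ∀ y ∈ s3, |Real.log (‖y‖ / ‖x - y‖)| ≤ Real.log (1+‖x‖) := by
    intro y hy
    obtain ⟨h1, h2⟩ := hs3pt y hy
    have hy1 : 1 ≤ ‖y‖ := by linarith
    have hyp : (0:ℝ) < ‖y‖ := by linarith
    have hxyp : (0:ℝ) < ‖x - y‖ := by linarith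
    have hup : ‖y‖ / ‖x - y‖ ≤ 1+‖x‖ := by
      rw [div_le_iff₀ hxyp]
      have ha : ‖y‖ ≤ ‖x - y‖ + ‖x‖ := by
        have hc : ‖y‖ - ‖x‖ ≤ ‖y - x‖ := norm_sub_norm_le y x
        rw [norm_sub_rev] at hc; linarith
      have hm : ‖x‖ * 1 ≤ ‖x‖ * ‖x - y‖ :=
        mul_le_mul_of_nonneg_left h2 (norm_nonneg x)
      linarith
    have hdown : (1+‖x‖)⁻¹ ≤ ‖y‖ / ‖x - y‖ := by
      have hc : ‖x - y‖ ≤ ‖y‖*(1+‖x‖) := by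
        have hm : 1 * ‖x‖ ≤ ‖y‖ * ‖x‖ := mul_le_mul_of_nonneg_right hy1 (norm_nonneg x)
        have := norm_sub_le x y
        linarith
      rw [← one_div, div_le_div_iff₀ (by positivity) hxyp]
      linarith
    rw [abs_le]
    constructor
    · have := Real.log_le_log (by positivity) hdown
      rwa [Real.log_inv] at this
    · exact Real.log_le_log (by positivity) hup
  have hi_g3 : IntegrableOn g s3 volume := by
    refine Integrable.mono ((habs.const_mul (Real.log (1+‖x‖))).integrableOn)
      (hg_meas.aestronglyMeasurable.restrict) ?_
    rw [ae_restrict_iff' hs3m]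
    refine ae_of_all _ fun y hy => ?_
    have h1 : 0 ≤ Real.log (1+‖x‖) := Real.log_nonneg (by linarith)
    simp only [hg_def, Real.norm_eq_abs, abs_mul]
    rw [abs_of_nonneg h1, abs_abs]
    exact mul_le_mul_of_nonneg_right (hL3 y hy) (abs_nonneg _)
  have hlog2 : Real.log (1+‖x‖) ≤ 2*l := by
    have h1 : 1+‖x‖ ≤ ‖x‖^2 := by nlinarith
    have h2 := Real.log_le_log (by linarith) h1
    rwa [Real.log_pow, Nat.cast_ofNat] at h2
  have P3 : ∀ y ∈ s3, (2*l) * f y ≤ g y := by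
    intro y hy
    obtain ⟨h1, h2⟩ := hs3pt y hy
    have hfy : f y ≤ 0 := hf_nonpos y (by linarith)
    have hlog : Real.log (‖y‖ / ‖x - y‖) ≤ 2*l := by
      have := (abs_le.mp (hL3 y hy)).2
      linarith
    simp only [hg_def]
    exact mul_le_mul_of_nonpos_right hlog hfy
  have J3 : (2*l) * (∫ y in s3, f y) ≤ ∫ y in s3, g y := by
    have := setIntegral_mono_on ((hi_fs s3).const_mul _) hi_g3 hs3m P3
    rwa [integral_const_mul] at this
  -- s4
  have hM₄' : ∀ y ∈ s4, |f y| ≤ M₄ := fun y hy => hM₄ y (ball_subset_closedBall hy)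
  have hi_logf4 : IntegrableOn (fun y => Real.log ‖x - y‖ * f y) s4 volume :=
    bdd_mul s4 hs4m _ ((intOn_log' x).mono_set ball_subset_closedBall) M₄ hM₄'
  have hi_r4 : IntegrableOn (fun y => (2*l) * f y - Real.log ‖x - y‖ * f y) s4 volume :=
    ((hi_fs s4).const_mul _).sub hi_logf4
  have hs4pt : ∀ y ∈ s4, y ≠ x → 0 < ‖y‖ ∧ 0 < ‖x - y‖ ∧
      Real.log (‖y‖ / ‖x - y‖) = Real.log ‖y‖ - Real.log ‖x - y‖ ∧
      Real.log ‖y‖ ≤ 2*l ∧ 0 ≤ Real.log ‖y‖ := by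
    intro y hy hyx
    obtain ⟨h1, h2, h3⟩ := hs4norm y hy
    have hyp : (0:ℝ) < ‖y‖ := by linarith
    have hxyp : (0:ℝ) < ‖x - y‖ := by
      rw [norm_pos_iff]
      exact sub_ne_zero.mpr (Ne.symm hyx)
    refine ⟨hyp, hxyp, Real.log_div hyp.ne' hxyp.ne', ?_, Real.log_nonneg (by linarith)⟩
    calc Real.log ‖y‖ ≤ Real.log (1+‖x‖) := Real.log_le_log hyp (by linarith)
      _ ≤ 2*l := hlog2
  have hi_g4 : IntegrableOn g s4 volume := by
    have hdom4 : IntegrableOn (fun y : E4 => (|Real.log ‖x - y‖| + 2*l) * M₄) s4 volume :=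
      (((intOn_log' x).mono_set ball_subset_closedBall).abs.add
        (integrableOn_const measure_ball_lt_top.ne)).mul_const M₄
    refine Integrable.mono hdom4 (hg_meas.aestronglyMeasurable.restrict) ?_
    rw [ae_restrict_iff' hs4m]
    refine ae_of_all _ fun y hy => ?_
    have hM₄0 : (0:ℝ) ≤ M₄ := le_trans (abs_nonneg _) (hM₄' y hy)
    by_cases hyx : y = x
    · have h0 : g y = 0 := by simp [hg_def, hyx]
      rw [h0, norm_zero]
      positivity
    · obtain ⟨hyp, hxyp, hdiv, hub, hlb⟩ := hs4pt y hy hyx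
      simp only [hg_def, Real.norm_eq_abs]
      have hbnd : |Real.log (‖y‖ / ‖x - y‖)| ≤ |Real.log ‖x - y‖| + 2*l := by
        rw [hdiv]
        calc |Real.log ‖y‖ - Real.log ‖x - y‖|
            ≤ |Real.log ‖y‖| + |Real.log ‖x - y‖| := abs_sub _ _
          _ ≤ |Real.log ‖x - y‖| + 2*l := by
              rw [abs_of_nonneg hlb]; linarith
      calc |Real.log (‖y‖ / ‖x - y‖) * f y|
          = |Real.log (‖y‖ / ‖x - y‖)| * |f y| := abs_mul _ _
        _ ≤ (|Real.log ‖x - y‖| + 2*l) * M₄ :=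
            mul_le_mul hbnd (hM₄' y hy) (abs_nonneg _) (le_trans (abs_nonneg _) hbnd)
        _ ≤ |(|Real.log ‖x - y‖| + 2*l) * M₄| := le_abs_self _
  have P4 : ∀ y ∈ s4, (2*l) * f y - Real.log ‖x - y‖ * f y ≤ g y := by
    intro y hy
    obtain ⟨-, h2, -⟩ := hs4norm y hy
    have hfy : f y ≤ 0 := hf_nonpos y (by linarith)
    by_cases hyx : y = x
    · have hgy : g y = 0 := by simp [hg_def, hyx]
      rw [hgy, hyx]
      simp only [sub_self, norm_zero, Real.log_zero, zero_mul, sub_zero]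
      have hfx : f x ≤ 0 := hf_nonpos x (by linarith)
      have := mul_nonpos_of_nonneg_of_nonpos (by linarith : (0:ℝ) ≤ 2*l) hfx
      linarith
    · obtain ⟨hyp, hxyp, hdiv, hub, hlb⟩ := hs4pt y hy hyx
      have hlog : Real.log (‖y‖ / ‖x - y‖) ≤ 2*l - Real.log ‖x - y‖ := by
        rw [hdiv]; linarith
      have := mul_le_mul_of_nonpos_right hlog hfy
      simp only [hg_def]
      linarith [this]
  have J4 : (2*l) * (∫ y in s4, f y) - (∫ y in s4, Real.log ‖x - y‖ * f y)
      ≤ ∫ y in s4, g y := by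
    have := setIntegral_mono_on hi_r4 hi_g4 hs4m P4
    rwa [integral_sub ((hi_fs s4).const_mul _) hi_logf4, integral_const_mul] at this
  -- decomposition of the total integrals
  have hBeq : s1 ∪ s2 = B := union_diff_cancel hsub1B
  have hBceq : s3 ∪ s4 = Bᶜ := diff_union_of_subset hsub4
  have hdisj12 : Disjoint s1 s2 := disjoint_sdiff_self_right
  have hdisj34 : Disjoint s3 s4 := disjoint_sdiff_self_left
  have huniv : (s1 ∪ s2) ∪ (s3 ∪ s4) = univ := by
    rw [hBeq, hBceq]; exact union_compl_self B
  have hg_int : Integrable g := by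
    rw [← integrableOn_univ, ← huniv]
    exact (hi_g1.union hi_g2).union (hi_g3.union hi_g4)
  have hsplit_g : ∫ y : E4, g y =
      ((∫ y in s1, g y) + (∫ y in s2, g y)) + ((∫ y in s3, g y) + (∫ y in s4, g y)) := by
    rw [← integral_add_compl hBm hg_int, ← hBceq, ← hBeq,
      setIntegral_union hdisj12 hs2m hi_g1 hi_g2,
      setIntegral_union hdisj34 hs4m hi_g3 hi_g4]
  set t3 : ℝ := ∫ y in s3, f y with ht3_def
  set t4 : ℝ := ∫ y in s4, f y with ht4_def
  have hsplit_f : ∫ y : E4, f y = (S + T) + (t3 + t4) := by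
    rw [← integral_add_compl hBm hf_int, ← hBceq, ← hBeq,
      setIntegral_union hdisj12 hs2m (hi_fs s1) (hi_fs s2),
      setIntegral_union hdisj34 hs4m (hi_fs s3) (hi_fs s4)]
  have htail34 : -(ε/2) ≤ t3 + t4 := by
    have heq : t3 + t4 = ∫ y in Bᶜ, f y := by
      rw [← hBceq, setIntegral_union hdisj34 hs4m (hi_fs s3) (hi_fs s4)]
    have habs2 : |∫ y in Bᶜ, f y| ≤ ∫ y in Bᶜ, |f y| := by
      calc |∫ y in Bᶜ, f y| = ‖∫ y in Bᶜ, f y‖ := (Real.norm_eq_abs _).symm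
        _ ≤ ∫ y in Bᶜ, ‖f y‖ := norm_integral_le_integral_norm f
        _ = ∫ y in Bᶜ, |f y| := by simp only [Real.norm_eq_abs]
    rw [heq]
    have := neg_abs_le (∫ y in Bᶜ, f y)
    have hB' : ∫ y in Bᶜ, |f y| < ε/2 := htail
    linarith
  -- assemble
  have hQ : QCurv p u = ∫ y : E4, f y := rfl
  have hΛ : QCurv p u = (S + T) + (t3 + t4) := by rw [hQ, hsplit_f]
  have hlog2x : Real.log (2*‖x‖) = Real.log 2 + l :=
    Real.log_mul two_ne_zero hx0.ne'
  set A : ℝ := ∫ y in s4, Real.log ‖x - y‖ * f y with hA_def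
  have key : (-(QCurv p u + 5*ε)) * l - A ≤ ∫ y : E4, g y := by
    rw [hsplit_g, hΛ]
    have e1 : -C₀ - (Real.log 2 + l) * S ≤ ∫ y in s1, g y := by
      rw [← hlog2x]; exact J1
    have e2 := J2
    have e3 := J3
    have e4 := J4
    have hw : -(ε/2) ≤ t3 + t4 := htail34
    have hprod : 0 ≤ (3*(t3+t4) + 4*ε) * l :=
      mul_nonneg (by linarith) hlx
    have hKl' := hKl
    rw [hK_def] at hKl'
    linarith [e1, e2, e3, e4, hprod, hKl']
  -- conclude
  have hpi : (0:ℝ) < 1/(8*π^2) := by positivity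
  have hgoal : (1/(8*π^2)) * ((-(QCurv p u + 5*ε)) * l - A)
      ≤ (1/(8*π^2)) * ∫ y : E4, g y :=
    mul_le_mul_of_nonneg_left key hpi.le
  have hlp : logPot p u x = (1/(8*π^2)) * ∫ y : E4, g y := rfl
  rw [ge_iff_le, hlp]
  calc -((QCurv p u + 5 * ε) / (8 * π ^ 2)) * l - 1/(8*π^2) * A
      = (1/(8*π^2)) * ((-(QCurv p u + 5*ε)) * l - A) := by ring
    _ ≤ _ := hgoal
end
end

section
/- Let p > 0 and let u : ℝ⁴ → ℝ be a measurable function such that x ↦ (1 − |x|^p)e^{4u(x)} is integrable on ℝ⁴. Then for every x ∈ ℝ⁴, the average of the positive part of u over the ball B_r(x) tends to zero as r → ∞: (1/|B_r(x)|) ∫_{B_r(x)} max(u(y), 0) dy → 0 as r → +∞. -/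
open MeasureTheory Real Filter

noncomputable section

section Aux

lemma pow_one_add_le (n : ℕ) {s : ℝ} (h0 : 0 ≤ s) (h1 : s ≤ 1) :
    (1 + s) ^ n ≤ 1 + 3 ^ n * s := by
  induction n with
  | zero => simp [h0]
  | succ n ih =>
      have h3 : (0:ℝ) ≤ 3 ^ n := by positivity
      have hs2 : s * s ≤ s := by nlinarith
      calc (1 + s) ^ (n + 1) = (1 + s) ^ n * (1 + s) := by ring
        _ ≤ (1 + 3 ^ n * s) * (1 + s) := by nlinarith [pow_nonneg (by linarith : (0:ℝ) ≤ 1 + s) n]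
        _ ≤ 1 + 3 ^ (n + 1) * s := by
            have h4 : (1:ℝ) ≤ 3 ^ n := one_le_pow₀ (by norm_num)
            rw [pow_succ]
            nlinarith [mul_le_mul_of_nonneg_left hs2 h3, mul_le_mul_of_nonneg_right h4 h0]

lemma key_rpow_ineq {q s : ℝ} (hq : 0 < q) (h0 : 0 < s) (h1 : s < 1) :
    (1 + s) ^ q ≤ (1 - s) ^ q + ((3:ℝ) ^ ⌈q⌉₊ + (⌈q⌉₊ : ℝ)) * s := by
  set n := ⌈q⌉₊ with hn
  have hqn : q ≤ (n : ℝ) := Nat.le_ceil q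
  have hA : (1 + s) ^ q ≤ 1 + 3 ^ n * s := by
    calc (1 + s) ^ q ≤ (1 + s) ^ (n : ℝ) :=
          Real.rpow_le_rpow_of_exponent_le (by linarith) hqn
      _ = (1 + s) ^ n := by rw [Real.rpow_natCast]
      _ ≤ 1 + 3 ^ n * s := pow_one_add_le n h0.le h1.le
  have hB : 1 - (n : ℝ) * s ≤ (1 - s) ^ q := by
    have h2 : (1 - s) ^ (n : ℝ) ≤ (1 - s) ^ q :=
      Real.rpow_le_rpow_of_exponent_ge (by linarith) (by linarith) hqn
    have h3 : 1 + (n : ℝ) * (-s) ≤ (1 + (-s)) ^ n := one_add_mul_le_pow (by linarith) n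
    rw [Real.rpow_natCast] at h2
    have : (1:ℝ) + (-s) = 1 - s := by ring
    rw [this] at h3
    nlinarith
  nlinarith

end Aux

lemma integrable_log_annulus (p : ℝ) (hp : 0 < p) :
    Integrable (fun y : E4 => max (-Real.log |1 - ‖y‖ ^ p|) 0) := by
  set h : E4 → ℝ := fun y => max (-Real.log |1 - ‖y‖ ^ p|) 0 with hh
  have h_meas : Measurable h := by
    apply Measurable.max _ measurable_const
    have hc : Continuous fun y : E4 => |1 - ‖y‖ ^ p| :=
      (continuous_const.sub (continuous_norm.rpow_const fun _ => Or.inr hp.le)).abs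
    exact (Real.measurable_log.comp hc.measurable).neg
  have h_nn : ∀ y, 0 ≤ h y := fun y => le_max_right _ _
  constructor
  · exact h_meas.aestronglyMeasurable
  · have hrw : (∫⁻ y, ‖h y‖ₑ) = ∫⁻ y, ENNReal.ofReal (h y) :=
      lintegral_enorm_of_nonneg h_nn
    rw [HasFiniteIntegral, hrw,
      lintegral_eq_lintegral_meas_le volume (ae_of_all _ h_nn) h_meas.aemeasurable]
    set K : ℝ := (3:ℝ) ^ ⌈p⁻¹ * 4⌉₊ + (⌈p⁻¹ * 4⌉₊ : ℝ) with hK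
    set mB := volume (Metric.ball (0 : E4) 1) with hmB
    have hbound : ∀ t ∈ Set.Ioi (0:ℝ),
        volume {a : E4 | t ≤ h a} ≤ ENNReal.ofReal (K * Real.exp (-t)) * mB := by
      intro t ht
      rw [Set.mem_Ioi] at ht
      set s : ℝ := Real.exp (-t) with hs
      have hs0 : 0 < s := Real.exp_pos _
      have hs1 : s < 1 := by rw [hs, Real.exp_lt_one_iff]; linarith
      set a : ℝ := (1 - s) ^ p⁻¹ with ha
      set b : ℝ := (1 + s) ^ p⁻¹ with hb
      have ha0 : 0 ≤ a := Real.rpow_nonneg (by linarith) _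
      have hb0 : 0 ≤ b := Real.rpow_nonneg (by linarith) _
      have hab : a ≤ b := Real.rpow_le_rpow (by linarith) (by linarith) (by positivity)
      have hsub : {y : E4 | t ≤ h y} ⊆ Metric.closedBall 0 b \ Metric.ball 0 a := by
        intro y hy
        simp only [Set.mem_setOf_eq, hh] at hy
        have hlog : t ≤ -Real.log |1 - ‖y‖ ^ p| := by
          rcases le_max_iff.mp hy with h' | h'
          · exact h'
          · linarith
        have hwle : |1 - ‖y‖ ^ p| ≤ s := by
          rcases eq_or_lt_of_le (abs_nonneg (1 - ‖y‖ ^ p)) with h' | h'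
          · rw [← h']; exact hs0.le
          · have := Real.exp_le_exp.mpr (by linarith : Real.log |1 - ‖y‖ ^ p| ≤ -t)
            rwa [Real.exp_log h'] at this
        rw [abs_le] at hwle
        have hy1 : ‖y‖ ^ p ≤ 1 + s := by linarith [hwle.1]
        have hy2 : 1 - s ≤ ‖y‖ ^ p := by linarith [hwle.2]
        have hnb : ‖y‖ ≤ b := by
          have := Real.rpow_le_rpow (Real.rpow_nonneg (norm_nonneg y) p) hy1
            (by positivity : (0:ℝ) ≤ p⁻¹)
          rwa [Real.rpow_rpow_inv (norm_nonneg y) hp.ne'] at this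
        have hna : a ≤ ‖y‖ := by
          have := Real.rpow_le_rpow (by linarith) hy2 (by positivity : (0:ℝ) ≤ p⁻¹)
          rwa [Real.rpow_rpow_inv (norm_nonneg y) hp.ne'] at this
        refine ⟨Metric.mem_closedBall.mpr (by simpa using hnb), fun hball => ?_⟩
        rw [Metric.mem_ball, dist_zero_right] at hball
        linarith
      calc volume {a : E4 | t ≤ h a}
          ≤ volume (Metric.closedBall (0:E4) b \ Metric.ball (0:E4) a) :=
            measure_mono hsub
        _ = volume (Metric.closedBall (0:E4) b) - volume (Metric.ball (0:E4) a) :=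
            measure_diff (Metric.ball_subset_closedBall.trans
                (Metric.closedBall_subset_closedBall hab))
              measurableSet_ball.nullMeasurableSet measure_ball_lt_top.ne
        _ ≤ ENNReal.ofReal (K * s) * mB := by
            rw [tsub_le_iff_right, Measure.addHaar_closedBall _ _ hb0,
              Measure.addHaar_ball _ _ ha0, ← hmB, ← add_mul]
            refine mul_le_mul_left ?_ mB
            rw [← ENNReal.ofReal_add (by positivity) (by positivity)]
            refine ENNReal.ofReal_le_ofReal ?_
            have hfr : Module.finrank ℝ E4 = 4 := finrank_euclideanSpace_fin
            rw [hfr]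
            have hb4 : b ^ (4:ℕ) = (1 + s) ^ (p⁻¹ * 4) := by
              rw [hb, ← Real.rpow_natCast ((1+s) ^ p⁻¹) 4, ← Real.rpow_mul (by linarith)]
              norm_num
            have ha4 : a ^ (4:ℕ) = (1 - s) ^ (p⁻¹ * 4) := by
              rw [ha, ← Real.rpow_natCast ((1-s) ^ p⁻¹) 4, ← Real.rpow_mul (by linarith)]
              norm_num
            rw [hb4, ha4]
            have := key_rpow_ineq (q := p⁻¹ * 4) (by positivity) hs0 hs1
            rw [hK]
            linarith [this]
    calc (∫⁻ t in Set.Ioi (0:ℝ), volume {a : E4 | t ≤ h a})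
        ≤ ∫⁻ t in Set.Ioi (0:ℝ), ENNReal.ofReal (K * Real.exp (-t)) * mB :=
          setLIntegral_mono' measurableSet_Ioi hbound
      _ = (∫⁻ t in Set.Ioi (0:ℝ), ENNReal.ofReal (K * Real.exp (-t))) * mB :=
          lintegral_mul_const' mB _ measure_ball_lt_top.ne
      _ < ⊤ := by
          refine ENNReal.mul_lt_top ?_ measure_ball_lt_top
          refine IntegrableOn.setLIntegral_lt_top ?_
          have h1 : IntegrableOn (fun t : ℝ => Real.exp (-t)) (Set.Ioi 0) := by
            simpa using exp_neg_integrableOn_Ioi 0 one_pos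
          exact h1.const_mul K


theorem average_u_plus_tendsto_zero (p : ℝ) (hp : 0 < p) (u : E4 → ℝ)
    (hmeas : Measurable u)
    (hint : Integrable (fun x : E4 => (1 - ‖x‖ ^ p) * Real.exp (4 * u x)))
    (x : E4) :
    Filter.Tendsto (fun r : ℝ => ⨍ y in Metric.ball x r, max (u y) 0)
      Filter.atTop (nhds 0) := by
  set f : E4 → ℝ := fun y => (1 - ‖y‖ ^ p) * Real.exp (4 * u y) with hf
  set h : E4 → ℝ := fun y => max (-Real.log |1 - ‖y‖ ^ p|) 0 with hh
  have hh_int : Integrable h := integrable_log_annulus p hp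
  set G : E4 → ℝ := fun y => (|f y| + h y) / 4 with hG
  have hG_int : Integrable G := (hint.abs.add hh_int).div_const 4
  have hG_nn : ∀ y, 0 ≤ G y := fun y => by
    have := abs_nonneg (f y); have := le_max_right (-Real.log |1 - ‖y‖ ^ p|) (0:ℝ)
    simp only [hG]; positivity
  -- pointwise a.e. bound
  have hae : ∀ᵐ y : E4, max (u y) 0 ≤ G y := by
    have hsph : volume (Metric.sphere (0:E4) 1) = 0 := Measure.addHaar_sphere volume 0 1
    filter_upwards [measure_eq_zero_iff_ae_notMem.mp hsph] with y hy
    have hy1 : ‖y‖ ≠ 1 := by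
      intro h'; exact hy (by simpa [mem_sphere_zero_iff_norm] using h')
    have hyp1 : ‖y‖ ^ p ≠ 1 := by
      rcases lt_trichotomy ‖y‖ 1 with h' | h' | h'
      · exact ne_of_lt (Real.rpow_lt_one (norm_nonneg y) h' hp)
      · exact absurd h' hy1
      · exact ne_of_gt ((Real.one_lt_rpow_iff_of_pos (by linarith)).mpr (Or.inl ⟨h', hp⟩))
    set w : ℝ := |1 - ‖y‖ ^ p| with hw
    have hw0 : 0 < w := abs_pos.mpr (sub_ne_zero.mpr fun h' => hyp1 h'.symm)
    have hef : |f y| = w * Real.exp (4 * u y) := by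
      rw [hf, abs_mul, abs_of_pos (Real.exp_pos _)]
    have hfpos : 0 < |f y| := by rw [hef]; positivity
    have hlogf : 4 * u y = Real.log (|f y|) - Real.log w := by
      have hexp : Real.exp (4 * u y) = |f y| / w := by rw [hef]; field_simp
      rw [← Real.log_div hfpos.ne' hw0.ne', ← hexp, Real.log_exp]
    rcases le_total (u y) 0 with hu | hu
    · rw [max_eq_right hu]; exact hG_nn y
    · rw [max_eq_left hu]
      have h1 : max (Real.log |f y|) 0 ≤ |f y| :=
        max_le (Real.log_le_self (abs_nonneg _)) (abs_nonneg _)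
      have h2 : 4 * u y ≤ max (Real.log |f y|) 0 + max (-Real.log w) 0 := by
        rw [hlogf]
        have := le_max_left (Real.log |f y|) (0:ℝ)
        have := le_max_left (-Real.log w) (0:ℝ)
        linarith
      have h3 : max (-Real.log w) 0 = h y := rfl
      simp only [hG]
      rw [← h3]
      linarith
  set C : ℝ := ∫ y : E4, G y with hC
  -- integral bound over balls
  have hIb : ∀ r : ℝ, ∫ y in Metric.ball x r, max (u y) 0 ≤ C := by
    intro r
    have hMon : IntegrableOn (fun y => max (u y) 0) (Metric.ball x r) := by
      refine Integrable.mono' hG_int.integrableOn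
        ((hmeas.max measurable_const).aestronglyMeasurable.restrict) ?_
      refine ae_restrict_of_ae (hae.mono fun y hy => ?_)
      rwa [Real.norm_eq_abs, abs_of_nonneg (le_max_right _ _)]
    calc ∫ y in Metric.ball x r, max (u y) 0
        ≤ ∫ y in Metric.ball x r, G y :=
          integral_mono_ae hMon hG_int.integrableOn (ae_restrict_of_ae hae)
      _ ≤ C := setIntegral_le_integral hG_int (ae_of_all _ hG_nn)
  -- squeeze
  have hm : 0 < (volume (Metric.ball (0:E4) 1)).toReal :=
    ENNReal.toReal_pos (Metric.measure_ball_pos volume 0 one_pos).ne' measure_ball_lt_top.ne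
  set m : ℝ := (volume (Metric.ball (0:E4) 1)).toReal with hmdef
  have hvol : ∀ r : ℝ, 0 ≤ r →
      (volume (Metric.ball x r)).toReal = r ^ 4 * m := by
    intro r hr
    rw [Measure.addHaar_ball volume x hr, ENNReal.toReal_mul, ENNReal.toReal_ofReal (by positivity),
      finrank_euclideanSpace_fin]
  have hBtend : Tendsto (fun r : ℝ => (r ^ 4 * m)⁻¹ * C) atTop (nhds 0) := by
    have h1 : Tendsto (fun r : ℝ => r ^ 4 * m) atTop atTop :=
      (tendsto_pow_atTop (by norm_num)).atTop_mul_const hm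
    have h2 : Tendsto (fun r : ℝ => (r ^ 4 * m)⁻¹) atTop (nhds 0) :=
      tendsto_inv_atTop_zero.comp h1
    simpa using h2.mul_const C
  refine tendsto_of_tendsto_of_tendsto_of_le_of_le' tendsto_const_nhds hBtend ?_ ?_
  · exact Eventually.of_forall fun r =>
      integral_nonneg fun y => le_max_right _ _
  · filter_upwards [eventually_gt_atTop (0:ℝ)] with r hr
    rw [setAverage_eq, smul_eq_mul, measureReal_def, hvol r hr.le]
    have hpos : 0 < r ^ 4 * m := by positivity
    exact mul_le_mul_of_nonneg_left (hIb r) (by positivity)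
end
end
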